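/- Let α₁, β₁, β₈ ∈ F with α₁ ≠ 0, β₁β₈ = 0 and (β₁, β₈) ≠ (0, 0); set a = α₁·e₁ and b = β₁e₁ + β₈e₂, and let c ∈ O. (1) If β₈ ≠ 0, then the equation (a·x)·b = c has a solution if and only if c = γ₂u₁ + γ₃u₂ + γ₄u₃ for some γ₂, γ₃, γ₄ ∈ F, in which case the set of all solutions is exactly {x = (x₁, γ₂/(α₁β₈), γ₃/(α₁β₈), γ₄/(α₁β₈), x₅, x₆, x₇, x₈) : x₁, x₅, x₆, x₇, x₈ ∈ F}. (2) If β₁ ≠ 0, then (a·x)·b = c has a solution if and only if c = γ₁·e₁ for some γ₁ ∈ F, in which case the set of all solutions is exactly {x = (γ₁/(α₁β₁), x₂, x₃, x₄, x₅, x₆, x₇, x₈) : x₂, ..., x₈ ∈ F}. -/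

import Mathlib

open Matrix

/-- Split octonions over `F`, written in coordinates: an octonion `(α, u; v, β)` with
`u, v ∈ F³` is the vector `(α, u₁, u₂, u₃, v₁, v₂, v₃, β) ∈ F⁸`
(coordinate `0` is `α`, coordinates `1,2,3` are `u`, coordinates `4,5,6` are `v`,
coordinate `7` is `β`). -/
abbrev Octo (F : Type*) := Fin 8 → F

variable {F : Type*} [Field F]

/-- Zorn vector-matrix multiplication of split octonions:
`(α, u; v, β)·(α', u'; v', β') =
 (αα' + u·v', αu' + β'u − v×v'; α'v + βv' + u×u', ββ' + v·u')`. -/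
def octMul (x y : Octo F) : Octo F :=
  ![x 0 * y 0 + (x 1 * y 4 + x 2 * y 5 + x 3 * y 6),
    x 0 * y 1 + y 7 * x 1 - (x 5 * y 6 - x 6 * y 5),
    x 0 * y 2 + y 7 * x 2 - (x 6 * y 4 - x 4 * y 6),
    x 0 * y 3 + y 7 * x 3 - (x 4 * y 5 - x 5 * y 4),
    y 0 * x 4 + x 7 * y 4 + (x 2 * y 3 - x 3 * y 2),
    y 0 * x 5 + x 7 * y 5 + (x 3 * y 1 - x 1 * y 3),
    y 0 * x 6 + x 7 * y 6 + (x 1 * y 2 - x 2 * y 1),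
    x 7 * y 7 + (x 4 * y 1 + x 5 * y 2 + x 6 * y 3)]

/-- Conjugation of split octonions: `(α, u; v, β) ↦ (β, −u; −v, α)`. -/
def octConj (x : Octo F) : Octo F :=
  ![x 7, -(x 1), -(x 2), -(x 3), -(x 4), -(x 5), -(x 6), x 0]

/-- The norm `n(a) = αβ − u·v` of a split octonion. -/
def octNorm (x : Octo F) : F := x 0 * x 7 - (x 1 * x 4 + x 2 * x 5 + x 3 * x 6)

/-- The trace `tr(a) = α + β` of a split octonion. -/
def octTr (x : Octo F) : F := x 0 + x 7

/-- The unit octonion `1 = (1, 0; 0, 1)`. -/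
def octOne : Octo F := ![1, 0, 0, 0, 0, 0, 0, 1]

def octE1 : Octo F := ![1, 0, 0, 0, 0, 0, 0, 0]
def octE2 : Octo F := ![0, 0, 0, 0, 0, 0, 0, 1]
def octU1 : Octo F := ![0, 1, 0, 0, 0, 0, 0, 0]
def octU2 : Octo F := ![0, 0, 1, 0, 0, 0, 0, 0]
def octU3 : Octo F := ![0, 0, 0, 1, 0, 0, 0, 0]
def octV1 : Octo F := ![0, 0, 0, 0, 1, 0, 0, 0]
def octV2 : Octo F := ![0, 0, 0, 0, 0, 1, 0, 0]
def octV3 : Octo F := ![0, 0, 0, 0, 0, 0, 1, 0]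

/-- `g` is an automorphism of the split octonion algebra: an `F`-linear bijection
preserving the multiplication. -/
def IsOctAut (g : Octo F ≃ₗ[F] Octo F) : Prop :=
  ∀ x y : Octo F, g (octMul x y) = octMul (g x) (g y)

/-- `X ∈ Ω_d`: `X` is a `d`-dimensional affine subspace (flat) of `O ≅ F⁸`,
i.e. `X = V + a` for an `F`-linear subspace `V` of dimension `d` and some `a`. -/
def IsFlat (d : ℕ) (X : Set (Octo F)) : Prop :=
  ∃ (V : Submodule F (Octo F)) (a : Octo F),
    Module.finrank F V = d ∧ X = (fun v => v + a) '' (V : Set (Octo F))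



section vec8aux
variable {α : Type*} (a₀ a₁ a₂ a₃ a₄ a₅ a₆ a₇ : α)
lemma vec8_0 : ![a₀,a₁,a₂,a₃,a₄,a₅,a₆,a₇] (0 : Fin 8) = a₀ := rfl
lemma vec8_1 : ![a₀,a₁,a₂,a₃,a₄,a₅,a₆,a₇] (1 : Fin 8) = a₁ := rfl
lemma vec8_2 : ![a₀,a₁,a₂,a₃,a₄,a₅,a₆,a₇] (2 : Fin 8) = a₂ := rfl
lemma vec8_3 : ![a₀,a₁,a₂,a₃,a₄,a₅,a₆,a₇] (3 : Fin 8) = a₃ := rfl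
lemma vec8_4 : ![a₀,a₁,a₂,a₃,a₄,a₅,a₆,a₇] (4 : Fin 8) = a₄ := rfl
lemma vec8_5 : ![a₀,a₁,a₂,a₃,a₄,a₅,a₆,a₇] (5 : Fin 8) = a₅ := rfl
lemma vec8_6 : ![a₀,a₁,a₂,a₃,a₄,a₅,a₆,a₇] (6 : Fin 8) = a₆ := rfl
lemma vec8_7 : ![a₀,a₁,a₂,a₃,a₄,a₅,a₆,a₇] (7 : Fin 8) = a₇ := rfl
end vec8aux

lemma finmk_0 (h : (0:ℕ) < 8) : (⟨0, h⟩ : Fin 8) = 0 := rfl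
lemma finmk_1 (h : (1:ℕ) < 8) : (⟨1, h⟩ : Fin 8) = 1 := rfl
lemma finmk_2 (h : (2:ℕ) < 8) : (⟨2, h⟩ : Fin 8) = 2 := rfl
lemma finmk_3 (h : (3:ℕ) < 8) : (⟨3, h⟩ : Fin 8) = 3 := rfl
lemma finmk_4 (h : (4:ℕ) < 8) : (⟨4, h⟩ : Fin 8) = 4 := rfl
lemma finmk_5 (h : (5:ℕ) < 8) : (⟨5, h⟩ : Fin 8) = 5 := rfl
lemma finmk_6 (h : (6:ℕ) < 8) : (⟨6, h⟩ : Fin 8) = 6 := rfl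
lemma finmk_7 (h : (7:ℕ) < 8) : (⟨7, h⟩ : Fin 8) = 7 := rfl

lemma octKey (α₁ β₁ β₈ : F) (x : Octo F) :
    octMul (octMul (α₁ • octE1) x) (β₁ • octE1 + β₈ • octE2) =
    ![α₁*β₁*x 0, α₁*β₈*x 1, α₁*β₈*x 2, α₁*β₈*x 3, 0, 0, 0, 0] := by
  have h1 : octMul (α₁ • octE1) x = ![α₁ * x 0, α₁ * x 1, α₁ * x 2, α₁ * x 3, 0, 0, 0, 0] := by
    funext i; fin_cases i <;>
      simp only [octMul, octE1, Pi.smul_apply, smul_eq_mul,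
        finmk_0, finmk_1, finmk_2, finmk_3, finmk_4, finmk_5, finmk_6, finmk_7,
        vec8_0, vec8_1, vec8_2, vec8_3, vec8_4, vec8_5, vec8_6, vec8_7] <;> ring
  rw [h1]
  funext i; fin_cases i <;>
    simp only [octMul, octE1, octE2, Pi.add_apply, Pi.smul_apply, smul_eq_mul,
      finmk_0, finmk_1, finmk_2, finmk_3, finmk_4, finmk_5, finmk_6, finmk_7,
      vec8_0, vec8_1, vec8_2, vec8_3, vec8_4, vec8_5, vec8_6, vec8_7] <;> ring

lemma octUsum (γ₂ γ₃ γ₄ : F) :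
    γ₂ • octU1 + γ₃ • octU2 + γ₄ • octU3 = (![0, γ₂, γ₃, γ₄, 0, 0, 0, 0] : Octo F) := by
  funext i; fin_cases i <;>
    simp only [octU1, octU2, octU3, Pi.add_apply, Pi.smul_apply, smul_eq_mul,
      finmk_0, finmk_1, finmk_2, finmk_3, finmk_4, finmk_5, finmk_6, finmk_7,
      vec8_0, vec8_1, vec8_2, vec8_3, vec8_4, vec8_5, vec8_6, vec8_7] <;> ring

lemma octE1smul (γ₁ : F) : γ₁ • octE1 = (![γ₁, 0, 0, 0, 0, 0, 0, 0] : Octo F) := by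
  funext i; fin_cases i <;>
    simp only [octE1, Pi.smul_apply, smul_eq_mul,
      finmk_0, finmk_1, finmk_2, finmk_3, finmk_4, finmk_5, finmk_6, finmk_7,
      vec8_0, vec8_1, vec8_2, vec8_3, vec8_4, vec8_5, vec8_6, vec8_7] <;> ring

/-- Case (V) of Theorem 5.1: solutions of `(a·x)·b = c` for `a = α₁·e₁`,
`b = β₁e₁ + β₈e₂` with `α₁ ≠ 0`, `β₁β₈ = 0`, `(β₁, β₈) ≠ (0, 0)`. -/
theorem stmt_10 [IsAlgClosed F] (α₁ β₁ β₈ : F) (hα : α₁ ≠ 0) (hββ : β₁ * β₈ = 0)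
    (hne : (β₁, β₈) ≠ (0, 0)) (c : Octo F) :
    (β₈ ≠ 0 →
      ((∃ x : Octo F, octMul (octMul (α₁ • octE1) x) (β₁ • octE1 + β₈ • octE2) = c) ↔
        ∃ γ₂ γ₃ γ₄ : F, c = γ₂ • octU1 + γ₃ • octU2 + γ₄ • octU3) ∧
      ∀ γ₂ γ₃ γ₄ : F, c = γ₂ • octU1 + γ₃ • octU2 + γ₄ • octU3 →
        {x : Octo F | octMul (octMul (α₁ • octE1) x) (β₁ • octE1 + β₈ • octE2) = c} =
          {x : Octo F | ∃ x₁ x₅ x₆ x₇ x₈ : F,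
            x = ![x₁, γ₂ / (α₁ * β₈), γ₃ / (α₁ * β₈), γ₄ / (α₁ * β₈), x₅, x₆, x₇, x₈]}) ∧
    (β₁ ≠ 0 →
      ((∃ x : Octo F, octMul (octMul (α₁ • octE1) x) (β₁ • octE1 + β₈ • octE2) = c) ↔
        ∃ γ₁ : F, c = γ₁ • octE1) ∧
      ∀ γ₁ : F, c = γ₁ • octE1 →
        {x : Octo F | octMul (octMul (α₁ • octE1) x) (β₁ • octE1 + β₈ • octE2) = c} =
          {x : Octo F | ∃ x₂ x₃ x₄ x₅ x₆ x₇ x₈ : F,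
            x = ![γ₁ / (α₁ * β₁), x₂, x₃, x₄, x₅, x₆, x₇, x₈]}) := by

  constructor
  · intro h8
    have hβ1 : β₁ = 0 := by
      rcases mul_eq_zero.mp hββ with h | h
      · exact h
      · exact absurd h h8
    have hab : α₁ * β₈ ≠ 0 := mul_ne_zero hα h8
    constructor
    · constructor
      · rintro ⟨x, hx⟩
        refine ⟨α₁ * β₈ * x 1, α₁ * β₈ * x 2, α₁ * β₈ * x 3, ?_⟩
        rw [octUsum, ← hx, octKey]
        funext i; fin_cases i <;>
          simp only [hβ1, finmk_0, finmk_1, finmk_2, finmk_3, finmk_4, finmk_5, finmk_6, finmk_7,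
            vec8_0, vec8_1, vec8_2, vec8_3, vec8_4, vec8_5, vec8_6, vec8_7] <;> ring
      · rintro ⟨γ₂, γ₃, γ₄, rfl⟩
        refine ⟨![0, γ₂/(α₁*β₈), γ₃/(α₁*β₈), γ₄/(α₁*β₈), 0, 0, 0, 0], ?_⟩
        rw [octKey, octUsum]
        funext i; fin_cases i <;>
          simp only [finmk_0, finmk_1, finmk_2, finmk_3, finmk_4, finmk_5, finmk_6, finmk_7,
            vec8_0, vec8_1, vec8_2, vec8_3, vec8_4, vec8_5, vec8_6, vec8_7] <;>
          field_simp <;> simp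
    · intro γ₂ γ₃ γ₄ hcv
      ext x
      simp only [Set.mem_setOf_eq, octKey]
      rw [hcv, octUsum]
      constructor
      · intro hx
        have h1 := congrFun hx 1
        have h2 := congrFun hx 2
        have h3 := congrFun hx 3
        simp only [vec8_1, vec8_2, vec8_3] at h1 h2 h3
        refine ⟨x 0, x 4, x 5, x 6, x 7, ?_⟩
        funext i; fin_cases i <;>
          simp only [finmk_0, finmk_1, finmk_2, finmk_3, finmk_4, finmk_5, finmk_6, finmk_7,
            vec8_0, vec8_1, vec8_2, vec8_3, vec8_4, vec8_5, vec8_6, vec8_7]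
        · rw [eq_div_iff hab]; linear_combination h1
        · rw [eq_div_iff hab]; linear_combination h2
        · rw [eq_div_iff hab]; linear_combination h3
      · rintro ⟨x₁, x₅, x₆, x₇, x₈, rfl⟩
        funext i; fin_cases i <;>
          simp only [hβ1, finmk_0, finmk_1, finmk_2, finmk_3, finmk_4, finmk_5, finmk_6, finmk_7,
            vec8_0, vec8_1, vec8_2, vec8_3, vec8_4, vec8_5, vec8_6, vec8_7] <;>
          field_simp <;> simp
  · intro h1
    have hβ8 : β₈ = 0 := by
      rcases mul_eq_zero.mp hββ with h | h
      · exact absurd h h1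
      · exact h
    have hab : α₁ * β₁ ≠ 0 := mul_ne_zero hα h1
    constructor
    · constructor
      · rintro ⟨x, hx⟩
        refine ⟨α₁ * β₁ * x 0, ?_⟩
        rw [octE1smul, ← hx, octKey]
        funext i; fin_cases i <;>
          simp only [hβ8, finmk_0, finmk_1, finmk_2, finmk_3, finmk_4, finmk_5, finmk_6, finmk_7,
            vec8_0, vec8_1, vec8_2, vec8_3, vec8_4, vec8_5, vec8_6, vec8_7] <;> ring
      · rintro ⟨γ₁, rfl⟩
        refine ⟨![γ₁/(α₁*β₁), 0, 0, 0, 0, 0, 0, 0], ?_⟩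
        rw [octKey, octE1smul]
        funext i; fin_cases i <;>
          simp only [finmk_0, finmk_1, finmk_2, finmk_3, finmk_4, finmk_5, finmk_6, finmk_7,
            vec8_0, vec8_1, vec8_2, vec8_3, vec8_4, vec8_5, vec8_6, vec8_7] <;>
          field_simp <;> simp
    · intro γ₁ hcv
      ext x
      simp only [Set.mem_setOf_eq, octKey]
      rw [hcv, octE1smul]
      constructor
      · intro hx
        have h0 := congrFun hx 0
        simp only [vec8_0] at h0
        refine ⟨x 1, x 2, x 3, x 4, x 5, x 6, x 7, ?_⟩
        funext i; fin_cases i <;>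
          simp only [finmk_0, finmk_1, finmk_2, finmk_3, finmk_4, finmk_5, finmk_6, finmk_7,
            vec8_0, vec8_1, vec8_2, vec8_3, vec8_4, vec8_5, vec8_6, vec8_7]
        rw [eq_div_iff hab]; linear_combination h0
      · rintro ⟨x₂, x₃, x₄, x₅, x₆, x₇, x₈, rfl⟩
        funext i; fin_cases i <;>
          simp only [hβ8, finmk_0, finmk_1, finmk_2, finmk_3, finmk_4, finmk_5, finmk_6, finmk_7,
            vec8_0, vec8_1, vec8_2, vec8_3, vec8_4, vec8_5, vec8_6, vec8_7] <;>
          field_simp <;> simp
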